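/- Let t ≥ 1 be an integer and let G be a finite simple graph that admits an immersion of K_{70t + 71}. Then G admits a totally even immersion of K_t. -/

import Mathlib

open SimpleGraph

/-- An immersion of `H` in `G`: an injection `φ` of the vertices of `H` into `G`
(the branch vertices), together with, for each edge `uv` of `H`, a trail in `G`
from `φ u` to `φ v` (the branch trails), such that the branch trails are
pairwise edge-disjoint.  The trail assigned to the reversed adjacency is the
reversed trail, so there is one branch trail per edge of `H`. -/
structure Immersion {V : Type*} {W : Type*} (G : SimpleGraph V) (H : SimpleGraph W) where
  φ : W ↪ V
  trail : ∀ ⦃u v : W⦄, H.Adj u v → G.Walk (φ u) (φ v)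
  isTrail : ∀ ⦃u v : W⦄ (h : H.Adj u v), (trail h).IsTrail
  symm : ∀ ⦃u v : W⦄ (h : H.Adj u v), trail h.symm = (trail h).reverse
  disjoint : ∀ ⦃u v a b : W⦄ (h₁ : H.Adj u v) (h₂ : H.Adj a b),
      s(u, v) ≠ s(a, b) → List.Disjoint (trail h₁).edges (trail h₂).edges

/-- `G` admits an immersion of `H`. -/
def HasImmersion {V W : Type*} (G : SimpleGraph V) (H : SimpleGraph W) : Prop :=
  Nonempty (Immersion G H)

/-- `G` admits a totally odd immersion of `H`: every branch trail has odd length. -/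
def HasTotallyOddImmersion {V W : Type*} (G : SimpleGraph V) (H : SimpleGraph W) : Prop :=
  ∃ I : Immersion G H, ∀ ⦃u v : W⦄ (h : H.Adj u v), Odd (I.trail h).length

/-- `G` admits a totally even immersion of `H`: every branch trail has even length. -/
def HasTotallyEvenImmersion {V W : Type*} (G : SimpleGraph V) (H : SimpleGraph W) : Prop :=
  ∃ I : Immersion G H, ∀ ⦃u v : W⦄ (h : H.Adj u v), Even (I.trail h).length

namespace TEI

open Finset

variable {t : ℕ}

abbrev Nn (t : ℕ) : ℕ := 70 * t + 71
abbrev Vt (t : ℕ) := Fin (Nn t)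

variable (c : Vt t → Vt t → ZMod 2)

/-- vertices (other than i,j) agreeing about i and j -/
def agr (i j : Vt t) : Finset (Vt t) :=
  univ.filter (fun w => w ≠ i ∧ w ≠ j ∧ c i w = c j w)

def dis (i j : Vt t) : Finset (Vt t) :=
  univ.filter (fun w => w ≠ i ∧ w ≠ j ∧ c i w ≠ c j w)

lemma agr_card_add_dis_card {i j : Vt t} (hij : i ≠ j) :
    (agr c i j).card + (dis c i j).card = 70 * t + 69 := by
  classical
  have hdisj : Disjoint (agr c i j) (dis c i j) := by
    simp only [Finset.disjoint_left, agr, dis, mem_filter]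
    rintro w ⟨-, -, -, h⟩ ⟨-, -, -, h'⟩
    exact h' h
  have hunion : (agr c i j) ∪ (dis c i j) = univ.filter (fun w => w ≠ i ∧ w ≠ j) := by
    ext w
    simp only [agr, dis, mem_union, mem_filter, mem_univ, true_and]
    tauto
  have h1 : (agr c i j).card + (dis c i j).card = ((agr c i j) ∪ (dis c i j)).card :=
    (card_union_of_disjoint hdisj).symm
  rw [h1, hunion]
  have : (univ.filter (fun w : Vt t => w ≠ i ∧ w ≠ j)) = (univ.erase i).erase j := by
    ext w
    simp only [mem_filter, mem_univ, true_and, mem_erase]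
    tauto
  rw [this, card_erase_of_mem, card_erase_of_mem] <;>
    simp [hij.symm, Nn]

/-- clones or anticlones of j -/
def useless (j : Vt t) : Finset (Vt t) :=
  univ.filter (fun u => u ≠ j ∧ ((agr c u j).card ≤ 12 * t ∨ (dis c u j).card ≤ 12 * t))

-- two clones of j disagree rarely
lemma dis_sub_clones {x y j : Vt t} :
    dis c x y ⊆ dis c x j ∪ dis c y j ∪ {j} := by
  intro w hw
  simp only [dis, mem_filter, mem_univ, true_and] at hw
  obtain ⟨hwx, hwy, hxy⟩ := hw
  by_cases hwj : w = j
  · simp [hwj]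
  simp only [mem_union, dis, mem_filter, mem_univ, true_and, mem_singleton]
  by_cases h1 : c x w = c j w
  · by_cases h2 : c y w = c j w
    · exact absurd (h1.trans h2.symm) hxy
    · exact Or.inl (Or.inr ⟨hwy, hwj, h2⟩)
  · exact Or.inl (Or.inl ⟨hwx, hwj, h1⟩)

lemma dis_sub_anticlones {x y j : Vt t} :
    dis c x y ⊆ agr c x j ∪ agr c y j ∪ {j} := by
  intro w hw
  simp only [dis, mem_filter, mem_univ, true_and] at hw
  obtain ⟨hwx, hwy, hxy⟩ := hw
  by_cases hwj : w = j
  · simp [hwj]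
  simp only [mem_union, agr, mem_filter, mem_univ, true_and, mem_singleton]
  by_cases h1 : c x w = c j w
  · exact Or.inl (Or.inl ⟨hwx, hwj, h1⟩)
  · by_cases h2 : c y w = c j w
    · exact Or.inl (Or.inr ⟨hwy, hwj, h2⟩)
    · -- both differ from c j w in ZMod 2, hence equal: contradiction
      exfalso
      have : ∀ a b d : ZMod 2, a ≠ d → b ≠ d → a = b := by decide
      exact hxy (this _ _ _ h1 h2)

/-! ### routes -/

def edgesOf (a b : Vt t) : List (Vt t) → List (Sym2 (Vt t))
  | [] => [s(a, b)]
  | [w] => [s(a, w), s(w, b)]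
  | u :: v :: _ => [s(a, u), s(u, v), s(v, b)]

def csum (a b : Vt t) : List (Vt t) → ZMod 2
  | [] => c a b
  | [w] => c a w + c w b
  | u :: v :: _ => c a u + c u v + c v b

def RouteValid (ψ : Fin t ↪ Vt t) (U : Finset (Sym2 (Vt t)))
    (p : Fin t × Fin t) (r : List (Vt t)) : Prop :=
  r.length ≤ 2 ∧
  (ψ p.1 :: (r ++ [ψ p.2])).Nodup ∧
  (∀ x ∈ r, ∀ k : Fin t, ψ k ≠ x) ∧
  csum c (ψ p.1) (ψ p.2) r = 0 ∧
  ∀ e ∈ edgesOf (ψ p.1) (ψ p.2) r, e ∉ U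

lemma RouteValid.mono {ψ : Fin t ↪ Vt t} {U U' : Finset (Sym2 (Vt t))}
    {p : Fin t × Fin t} {r : List (Vt t)} (hU : U ⊆ U')
    (h : RouteValid c ψ U' p r) : RouteValid c ψ U p r :=
  ⟨h.1, h.2.1, h.2.2.1, h.2.2.2.1, fun e he hmem => h.2.2.2.2 e he (hU hmem)⟩

def udeg (U : Finset (Sym2 (Vt t))) (x : Vt t) : ℕ :=
  (U.filter (fun e => x ∈ e)).card

lemma card_filter_edge_mem_le {U : Finset (Sym2 (Vt t))} (x : Vt t) :
    (univ.filter (fun w : Vt t => s(x, w) ∈ U)).card ≤ udeg U x := by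
  classical
  apply Finset.card_le_card_of_injOn (fun w => s(x, w))
  · intro w hw
    simp only [mem_filter, mem_univ, true_and] at hw ⊢
    exact Finset.mem_filter.2 ⟨(Finset.mem_filter.1 (Finset.mem_coe.1 hw)).2, Sym2.mem_mk_left x w⟩
  · intro w₁ _ w₂ _ h
    rcases Sym2.eq_iff.1 h with ⟨-, h⟩ | ⟨h1, h2⟩
    · exact h
    · rw [← h1, h2]

lemma sum_udeg_le (U : Finset (Sym2 (Vt t))) :
    ∑ x : Vt t, udeg U x ≤ 2 * U.card := by
  classical
  unfold udeg
  have h1 : ∀ x : Vt t, (U.filter (fun e => x ∈ e)).card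
      = ∑ e ∈ U, (if x ∈ e then 1 else 0) := by
    intro x; rw [Finset.card_filter]
  simp_rw [h1]
  rw [Finset.sum_comm]
  have h2 : ∀ e ∈ U, (∑ x : Vt t, if x ∈ e then 1 else 0) ≤ 2 := by
    intro e _
    induction e using Sym2.ind with
    | _ a b =>
      have : (∑ x : Vt t, if x ∈ s(a,b) then 1 else 0)
          = (univ.filter (fun x : Vt t => x ∈ s(a,b))).card := by
        rw [Finset.card_filter]
      rw [this]
      have hsub : (univ.filter (fun x : Vt t => x ∈ s(a,b))) ⊆ {a, b} := by
        intro x hx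
        simp only [mem_filter, Sym2.mem_iff] at hx
        simp only [mem_insert, mem_singleton]
        exact hx.2
      calc (univ.filter (fun x : Vt t => x ∈ s(a,b))).card ≤ ({a, b} : Finset (Vt t)).card :=
            card_le_card hsub
        _ ≤ 2 := card_insert_le _ _ |>.trans (by simp)
  calc (∑ e ∈ U, ∑ x : Vt t, if x ∈ e then 1 else 0) ≤ ∑ e ∈ U, 2 :=
        Finset.sum_le_sum h2
    _ = 2 * U.card := by rw [Finset.sum_const, smul_eq_mul, mul_comm]

lemma heavy_card_le {U : Finset (Sym2 (Vt t))} (hU : U.card ≤ 3 * t * t) :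
    (univ.filter (fun x : Vt t => 3 * t + 1 ≤ udeg U x)).card ≤ 2 * t := by
  classical
  set H := univ.filter (fun x : Vt t => 3 * t + 1 ≤ udeg U x) with hH
  by_contra hcon
  push_neg at hcon
  have h1 : H.card * (3 * t + 1) ≤ ∑ x ∈ H, udeg U x := by
    calc H.card * (3 * t + 1) = ∑ _x ∈ H, (3 * t + 1) := by
          rw [Finset.sum_const, smul_eq_mul]
      _ ≤ ∑ x ∈ H, udeg U x := by
          apply Finset.sum_le_sum
          intro x hx
          rw [hH] at hx
          exact (mem_filter.1 hx).2
  have h2 : ∑ x ∈ H, udeg U x ≤ ∑ x : Vt t, udeg U x :=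
    Finset.sum_le_sum_of_subset (subset_univ H)
  have h3 := sum_udeg_le U
  have h4 : (2 * t + 1) * (3 * t + 1) ≤ H.card * (3 * t + 1) :=
    Nat.mul_le_mul_right _ hcon
  have h5 : (2 * t + 1) * (3 * t + 1) = 6 * t * t + 5 * t + 1 := by ring
  have h6 : 2 * (3 * t * t) = 6 * t * t := by ring
  omega

lemma exists_notin {α : Type*} [DecidableEq α] {C B : Finset α} (h : B.card < C.card) :
    ∃ x ∈ C, x ∉ B := by
  by_contra hcon
  push_neg at hcon
  exact absurd (card_le_card hcon) (not_le.2 h)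

lemma zmod2_add_self (a : ZMod 2) : a + a = 0 := by revert a; decide

lemma zmod2_ne (a b : ZMod 2) (h : a ≠ b) : a + b = 1 := by revert h; revert a b; decide

/-- Case I local fix: all branch pairs agree a lot. -/
lemma hfix_clone (ψ : Fin t ↪ Vt t) (hsym : ∀ i j : Vt t, c i j = c j i)
    (hagr : ∀ i j : Fin t, i ≠ j → 5 * t + 10 ≤ (agr c (ψ i) (ψ j)).card)
    (i j : Fin t) (U : Finset (Sym2 (Vt t))) (hij : i ≠ j)
    (hdi : udeg U (ψ i) ≤ 2 * t) (hdj : udeg U (ψ j) ≤ 2 * t) (hUc : U.card ≤ 3 * t * t)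
    (hne : c (ψ i) (ψ j) ≠ 0) :
    ∃ r, RouteValid c ψ U (i, j) r := by
  classical
  set B := (univ.image ψ) ∪ (univ.filter (fun w => s(ψ i, w) ∈ U))
      ∪ (univ.filter (fun w => s(ψ j, w) ∈ U)) with hB
  have hBcard : B.card ≤ 5 * t := by
    have h1 : (univ.image ψ).card ≤ t := le_trans (card_image_le) (by simp)
    have h2 := card_filter_edge_mem_le (U := U) (ψ i)
    have h3 := card_filter_edge_mem_le (U := U) (ψ j)
    calc B.card ≤ ((univ.image ψ) ∪ (univ.filter (fun w => s(ψ i, w) ∈ U))).card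
        + (univ.filter (fun w => s(ψ j, w) ∈ U)).card := card_union_le _ _
      _ ≤ (univ.image ψ).card + (univ.filter (fun w => s(ψ i, w) ∈ U)).card
        + (univ.filter (fun w => s(ψ j, w) ∈ U)).card := by
          have := card_union_le (univ.image ψ) (univ.filter (fun w => s(ψ i, w) ∈ U))
          omega
      _ ≤ t + 2 * t + 2 * t := by
          have := h2.trans hdi; have := h3.trans hdj; omega
      _ = 5 * t := by ring
  obtain ⟨w, hwC, hwB⟩ := exists_notin (C := agr c (ψ i) (ψ j)) (B := B)
    (lt_of_le_of_lt hBcard (lt_of_lt_of_le (by omega) (hagr i j hij)))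
  simp only [hB, mem_union, mem_filter, mem_univ, true_and, mem_image, not_or, not_exists] at hwB
  obtain ⟨⟨hwψ, hwU1⟩, hwU2⟩ := hwB
  simp only [agr, mem_filter, mem_univ, true_and] at hwC
  obtain ⟨hwi, hwj, hwc⟩ := hwC
  refine ⟨[w], by norm_num, ?_, ?_, ?_, ?_⟩
  · have h1 : ψ i ≠ w := fun h => hwi h.symm
    have h2 : ψ i ≠ ψ j := fun h => hij (ψ.injective h)
    simp [List.nodup_cons, h1, h2, hwj]
  · intro x hx k
    simp only [List.mem_singleton] at hx
    subst hx
    intro h; exact hwψ k h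
  · show c (ψ i) w + c w (ψ j) = 0
    rw [hsym w (ψ j), hwc]
    exact zmod2_add_self _
  · intro e he
    simp only [edgesOf, List.mem_cons, List.mem_singleton] at he
    rcases he with rfl | rfl | h
    · exact hwU1
    · rw [Sym2.eq_swap]; exact hwU2
    · exact absurd h List.not_mem_nil

/-- Case II local fix: no vertex has many clones/anticlones. -/
lemma hfix_generic (ψ : Fin t ↪ Vt t) (hsym : ∀ i j : Vt t, c i j = c j i)
    (huse : ∀ x : Vt t, (useless c x).card ≤ 2 * t + 1)
    (i j : Fin t) (U : Finset (Sym2 (Vt t))) (hij : i ≠ j)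
    (hdi : udeg U (ψ i) ≤ 2 * t) (hdj : udeg U (ψ j) ≤ 2 * t) (hUc : U.card ≤ 3 * t * t)
    (hne : c (ψ i) (ψ j) ≠ 0) :
    ∃ r, RouteValid c ψ U (i, j) r := by
  classical
  -- choose u
  set B := (useless c (ψ j)) ∪ (univ.image ψ) ∪ (univ.filter (fun w => s(ψ i, w) ∈ U))
      ∪ (univ.filter (fun x : Vt t => 3 * t + 1 ≤ udeg U x)) with hB
  have hBcard : B.card ≤ 7 * t + 1 := by
    have h1 : (univ.image ψ).card ≤ t := le_trans (card_image_le) (by simp)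
    have h2 := (card_filter_edge_mem_le (U := U) (ψ i)).trans hdi
    have h3 := heavy_card_le (t := t) hUc
    have h4 := huse (ψ j)
    have c1 := card_union_le (useless c (ψ j)) (univ.image ψ)
    have c2 := card_union_le ((useless c (ψ j)) ∪ (univ.image ψ))
      (univ.filter (fun w => s(ψ i, w) ∈ U))
    have c3 := card_union_le ((useless c (ψ j)) ∪ (univ.image ψ)
      ∪ (univ.filter (fun w => s(ψ i, w) ∈ U)))
      (univ.filter (fun x : Vt t => 3 * t + 1 ≤ udeg U x))
    rw [← hB] at c3
    omega
  obtain ⟨u, -, huB⟩ := exists_notin (C := (univ : Finset (Vt t))) (B := B)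
    (lt_of_le_of_lt hBcard (by simp [Nn]; omega))
  simp only [hB, mem_union, mem_filter, mem_univ, true_and, mem_image, not_or, not_exists,
    not_le] at huB
  obtain ⟨⟨⟨huse', huψ⟩, huU⟩, hulight⟩ := huB
  have huj : u ≠ ψ j := fun h => huψ j h.symm
  have hui : u ≠ ψ i := fun h => huψ i h.symm
  have hKey : 12 * t < (agr c u (ψ j)).card ∧ 12 * t < (dis c u (ψ j)).card := by
    simp only [useless, mem_filter, mem_univ, true_and, not_and_or, not_or, not_le] at huse'
    rcases huse' with h | h
    · exact absurd h (by simpa using huj)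
    · exact h
  -- choose v
  set T := if c (ψ i) u = 0 then agr c u (ψ j) else dis c u (ψ j) with hT
  have hTcard : 12 * t < T.card := by
    rw [hT]; split
    · exact hKey.1
    · exact hKey.2
  set B2 := (univ.image ψ) ∪ (univ.filter (fun w => s(ψ j, w) ∈ U))
      ∪ (univ.filter (fun w => s(u, w) ∈ U)) with hB2
  have hB2card : B2.card ≤ 6 * t := by
    have h1 : (univ.image ψ).card ≤ t := le_trans (card_image_le) (by simp)
    have h2 : (univ.filter (fun w => s(ψ j, w) ∈ U)).card ≤ 2 * t :=
      (card_filter_edge_mem_le (U := U) (ψ j)).trans hdj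
    have h3 : (univ.filter (fun w => s(u, w) ∈ U)).card ≤ 3 * t :=
      (card_filter_edge_mem_le (U := U) u).trans (by omega)
    have c1 := card_union_le (univ.image ψ) (univ.filter (fun w => s(ψ j, w) ∈ U))
    have c2 := card_union_le ((univ.image ψ) ∪ (univ.filter (fun w => s(ψ j, w) ∈ U)))
      (univ.filter (fun w => s(u, w) ∈ U))
    rw [← hB2] at c2
    omega
  obtain ⟨v, hvT, hvB⟩ := exists_notin (C := T) (B := B2)
    (lt_of_le_of_lt hB2card (by omega))
  simp only [hB2, mem_union, mem_filter, mem_univ, true_and, mem_image, not_or,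
    not_exists] at hvB
  obtain ⟨⟨hvψ, hvU1⟩, hvU2⟩ := hvB
  have hvu : v ≠ u := by
    rw [hT] at hvT
    revert hvT; split <;>
      (intro hvT; simp only [agr, dis, mem_filter] at hvT; exact hvT.2.1)
  have hvj : v ≠ ψ j := by
    rw [hT] at hvT
    revert hvT; split <;>
      (intro hvT; simp only [agr, dis, mem_filter] at hvT; exact hvT.2.2.1)
  have hvi : v ≠ ψ i := fun h => hvψ i h.symm
  refine ⟨[u, v], by norm_num, ?_, ?_, ?_, ?_⟩
  · have h2 : ψ i ≠ ψ j := fun h => hij (ψ.injective h)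
    simp [List.nodup_cons, Ne.symm hui, h2, Ne.symm hvi, Ne.symm hvu, hvu, huj, hvj]
  · intro x hx k
    simp only [List.mem_cons, List.mem_singleton] at hx
    rcases hx with rfl | rfl | h
    · exact huψ k
    · exact hvψ k
    · exact absurd h List.not_mem_nil
  · show c (ψ i) u + c u v + c v (ψ j) = 0
    rw [hT] at hvT
    by_cases h0 : c (ψ i) u = 0
    · rw [if_pos h0] at hvT
      simp only [agr, mem_filter, mem_univ, true_and] at hvT
      rw [h0, hsym v (ψ j), ← hvT.2.2]
      rw [zero_add]
      exact zmod2_add_self _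
    · rw [if_neg h0] at hvT
      simp only [dis, mem_filter, mem_univ, true_and] at hvT
      have h1 : c (ψ i) u = 1 := by
        revert h0; generalize c (ψ i) u = a; revert a; decide
      have h2 : c u v + c v (ψ j) = 1 := by
        rw [hsym v (ψ j)]
        exact zmod2_ne _ _ hvT.2.2
      rw [h1, add_assoc, h2]
      decide
  · intro e he
    simp only [edgesOf, List.mem_cons, List.mem_singleton] at he
    rcases he with rfl | rfl | rfl | h
    · exact huU
    · exact hvU2
    · rw [Sym2.eq_swap]; exact hvU1
    · exact absurd h List.not_mem_nil

lemma route_shape {α : Type*} {r : List α} (h : r.length ≤ 2) :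
    r = [] ∨ (∃ w, r = [w]) ∨ (∃ u v, r = [u, v]) := by
  match r with
  | [] => exact Or.inl rfl
  | [w] => exact Or.inr (Or.inl ⟨w, rfl⟩)
  | [u, v] => exact Or.inr (Or.inr ⟨u, v, rfl⟩)
  | u :: v :: w :: l => simp at h

/-- each route uses at most one edge at each branch vertex, and only at its endpoints -/
lemma udeg_route {ψ : Fin t ↪ Vt t} {U : Finset (Sym2 (Vt t))} {p : Fin t × Fin t}
    {r : List (Vt t)} (hrv : RouteValid c ψ U p r) (k : Fin t) :
    (((edgesOf (ψ p.1) (ψ p.2) r).toFinset).filter (fun e => ψ k ∈ e)).card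
      ≤ if p.1 = k ∨ p.2 = k then 1 else 0 := by
  classical
  obtain ⟨hlen, hnd, hint, -, -⟩ := hrv
  have hab : ψ p.1 ≠ ψ p.2 := by
    rcases route_shape hlen with rfl | ⟨w, rfl⟩ | ⟨u, v, rfl⟩ <;> simp_all
  have hpp : p.1 ≠ p.2 := fun h => hab (by rw [h])
  by_cases hk : p.1 = k ∨ p.2 = k
  · rw [if_pos hk]
    rw [Finset.card_le_one]
    intro e he e' he'
    simp only [mem_filter, List.mem_toFinset] at he he'
    rcases route_shape hlen with rfl | ⟨w, rfl⟩ | ⟨u, v, rfl⟩ <;>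
      simp only [edgesOf, List.mem_cons, List.mem_singleton, List.not_mem_nil, or_false]
        at he he'
    · rcases he.1 with rfl; rcases he'.1 with rfl; rfl
    · have hw : ∀ m : Fin t, ψ m ≠ w := fun m => hint w (by simp) m
      rcases hk with rfl | rfl <;>
        rcases he with ⟨rfl | rfl, h⟩ <;> rcases he' with ⟨rfl | rfl, h'⟩ <;>
        simp_all [Sym2.mem_iff]
    · have hu : ∀ m : Fin t, ψ m ≠ u := fun m => hint u (by simp) m
      have hv : ∀ m : Fin t, ψ m ≠ v := fun m => hint v (by simp) m
      rcases hk with rfl | rfl <;>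
        rcases he with ⟨rfl | rfl | rfl, h⟩ <;> rcases he' with ⟨rfl | rfl | rfl, h'⟩ <;>
        simp_all [Sym2.mem_iff]
  · rw [if_neg hk]
    push_neg at hk
    rw [Nat.le_zero, Finset.card_eq_zero]
    ext e
    simp only [mem_filter, List.mem_toFinset, notMem_empty, iff_false, not_and]
    intro he hmem
    exfalso
    rcases route_shape hlen with rfl | ⟨w, rfl⟩ | ⟨u, v, rfl⟩ <;>
      simp only [edgesOf, List.mem_cons, List.mem_singleton, List.not_mem_nil, or_false] at he
    · rcases he with rfl
      rcases Sym2.mem_iff.1 hmem with h | h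
      · exact hk.1 (ψ.injective h).symm
      · exact hk.2 (ψ.injective h).symm
    · have hw : ∀ m : Fin t, ψ m ≠ w := fun m => hint w (by simp) m
      rcases he with rfl | rfl <;> rcases Sym2.mem_iff.1 hmem with h | h
      · exact hk.1 (ψ.injective h).symm
      · exact hw _ h
      · exact hw _ h
      · exact hk.2 (ψ.injective h).symm
    · have hu : ∀ m : Fin t, ψ m ≠ u := fun m => hint u (by simp) m
      have hv : ∀ m : Fin t, ψ m ≠ v := fun m => hint v (by simp) m
      rcases he with rfl | rfl | rfl <;> rcases Sym2.mem_iff.1 hmem with h | h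
      · exact hk.1 (ψ.injective h).symm
      · exact hu _ h
      · exact hu _ h
      · exact hv _ h
      · exact hv _ h
      · exact hk.2 (ψ.injective h).symm

lemma route_edge_ne {ψ : Fin t ↪ Vt t} {U : Finset (Sym2 (Vt t))} {p q : Fin t × Fin t}
    {r : List (Vt t)} (hrv : RouteValid c ψ U p r)
    (hp : p.1 < p.2) (hq : q.1 < q.2) (hpq : q ≠ p) :
    s(ψ q.1, ψ q.2) ∉ edgesOf (ψ p.1) (ψ p.2) r := by
  obtain ⟨hlen, hnd, hint, -, -⟩ := hrv
  have hmain : s(ψ q.1, ψ q.2) ≠ s(ψ p.1, ψ p.2) := by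
    intro h
    rcases Sym2.eq_iff.1 h with ⟨h1, h2⟩ | ⟨h1, h2⟩
    · exact hpq (Prod.ext (ψ.injective h1) (ψ.injective h2))
    · have e1 : q.1 = p.2 := ψ.injective h1
      have e2 : q.2 = p.1 := ψ.injective h2
      omega
  have hintedge : ∀ x ∈ r, ∀ y : Vt t, s(ψ q.1, ψ q.2) ≠ s(x, y) ∧ s(ψ q.1, ψ q.2) ≠ s(y, x) := by
    intro x hx y
    constructor <;> intro h <;> rcases Sym2.eq_iff.1 h with ⟨h1, h2⟩ | ⟨h1, h2⟩
    · exact hint x hx q.1 h1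
    · exact hint x hx q.2 h2
    · exact hint x hx q.2 h2
    · exact hint x hx q.1 h1
  rcases route_shape hlen with rfl | ⟨w, rfl⟩ | ⟨u, v, rfl⟩ <;>
    simp only [edgesOf, List.mem_cons, List.mem_singleton, List.not_mem_nil, or_false]
  · exact hmain
  · push_neg
    exact ⟨(hintedge w (by simp) (ψ p.1)).2, (hintedge w (by simp) (ψ p.2)).1⟩
  · push_neg
    exact ⟨(hintedge u (by simp) (ψ p.1)).2, (hintedge u (by simp) v).1,
      (hintedge v (by simp) (ψ p.2)).1⟩

lemma edgesOf_toFinset_card_le (a b : Vt t) (r : List (Vt t)) :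
    (edgesOf a b r).toFinset.card ≤ 3 := by
  have h : (edgesOf a b r).length ≤ 3 := by
    match r with
    | [] => simp [edgesOf]
    | [w] => simp [edgesOf]
    | u :: v :: l => simp [edgesOf]
  calc (edgesOf a b r).toFinset.card ≤ (edgesOf a b r).length := List.toFinset_card_le _
    _ ≤ 3 := h

/-- The greedy construction of edge-disjoint routes. -/
lemma greedy (ψ : Fin t ↪ Vt t)
    (HFix : ∀ (i j : Fin t) (U : Finset (Sym2 (Vt t))), i ≠ j →
      udeg U (ψ i) ≤ 2 * t → udeg U (ψ j) ≤ 2 * t → U.card ≤ 3 * t * t →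
      c (ψ i) (ψ j) ≠ 0 → ∃ r, RouteValid c ψ U (i, j) r) :
    ∀ (n : ℕ) (PS : Finset (Fin t × Fin t)) (U : Finset (Sym2 (Vt t))),
    PS.card = n →
    (∀ p ∈ PS, p.1 < p.2) →
    (∀ k : Fin t, udeg U (ψ k) + (PS.filter (fun p => p.1 = k ∨ p.2 = k)).card ≤ 2 * t) →
    (U.card + 3 * PS.card ≤ 3 * t * t) →
    (∀ p ∈ PS, s(ψ p.1, ψ p.2) ∉ U) →
    ∃ route : Fin t × Fin t → List (Vt t),
      (∀ p ∈ PS, RouteValid c ψ U p (route p)) ∧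
      (∀ p ∈ PS, ∀ q ∈ PS, p ≠ q →
        List.Disjoint (edgesOf (ψ p.1) (ψ p.2) (route p))
          (edgesOf (ψ q.1) (ψ q.2) (route q))) := by
  classical
  intro n
  induction n with
  | zero =>
    intro PS U hcard _ _ _ _
    rw [Finset.card_eq_zero] at hcard
    subst hcard
    exact ⟨fun _ => [], by simp, by simp⟩
  | succ n ih =>
    intro PS U hcard hlt inv1 inv2 inv3
    have hne : PS.Nonempty := by
      rw [← Finset.card_pos, hcard]; omega
    obtain ⟨p, hp⟩ := hne
    have hplt : p.1 < p.2 := hlt p hp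
    have hp12 : p.1 ≠ p.2 := ne_of_lt hplt
    -- find a route for p
    have hdeg : ∀ k : Fin t, udeg U (ψ k) ≤ 2 * t := fun k => by
      have := inv1 k; omega
    have hUcard : U.card ≤ 3 * t * t := by omega
    have hr : ∃ r, RouteValid c ψ U p r := by
      by_cases h0 : c (ψ p.1) (ψ p.2) = 0
      · refine ⟨[], by simp, ?_, by simp, h0, ?_⟩
        · have : ψ p.1 ≠ ψ p.2 := fun h => hp12 (ψ.injective h)
          simp [this]
        · intro e he
          simp only [edgesOf, List.mem_singleton] at he
          subst he
          exact inv3 p hp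
      · obtain ⟨r, hr⟩ := HFix p.1 p.2 U hp12 (hdeg p.1) (hdeg p.2) hUcard h0
        exact ⟨r, hr⟩
    obtain ⟨r, hr⟩ := hr
    -- the new used-edge set
    set U' := U ∪ (edgesOf (ψ p.1) (ψ p.2) r).toFinset with hU'
    set PS' := PS.erase p with hPS'
    have hUsub : U ⊆ U' := Finset.subset_union_left
    have hcard' : PS'.card = n := by
      rw [hPS', card_erase_of_mem hp, hcard]
      omega
    have hlt' : ∀ q ∈ PS', q.1 < q.2 := fun q hq => hlt q (mem_of_mem_erase hq)
    have inv1' : ∀ k : Fin t,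
        udeg U' (ψ k) + (PS'.filter (fun q => q.1 = k ∨ q.2 = k)).card ≤ 2 * t := by
      intro k
      have hud : udeg U' (ψ k) ≤ udeg U (ψ k)
          + (((edgesOf (ψ p.1) (ψ p.2) r).toFinset).filter (fun e => ψ k ∈ e)).card := by
        rw [hU']
        unfold udeg
        rw [Finset.filter_union]
        exact card_union_le _ _
      have hroute := udeg_route c hr k
      have hfe : PS'.filter (fun q => q.1 = k ∨ q.2 = k)
          = (PS.filter (fun q => q.1 = k ∨ q.2 = k)).erase p := by
        rw [hPS', Finset.filter_erase]
      by_cases hk : p.1 = k ∨ p.2 = k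
      · rw [if_pos hk] at hroute
        have hpmem : p ∈ PS.filter (fun q => q.1 = k ∨ q.2 = k) :=
          mem_filter.2 ⟨hp, hk⟩
        have : (PS'.filter (fun q => q.1 = k ∨ q.2 = k)).card
            = (PS.filter (fun q => q.1 = k ∨ q.2 = k)).card - 1 := by
          rw [hfe, card_erase_of_mem hpmem]
        have hpos : 1 ≤ (PS.filter (fun q => q.1 = k ∨ q.2 = k)).card :=
          Finset.card_pos.2 ⟨p, hpmem⟩
        have := inv1 k
        omega
      · rw [if_neg hk] at hroute
        have hle : (PS'.filter (fun q => q.1 = k ∨ q.2 = k)).card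
            ≤ (PS.filter (fun q => q.1 = k ∨ q.2 = k)).card := by
          rw [hfe]; exact card_erase_le
        have := inv1 k
        omega
    have inv2' : U'.card + 3 * PS'.card ≤ 3 * t * t := by
      have h1 : U'.card ≤ U.card + 3 := by
        calc U'.card ≤ U.card + (edgesOf (ψ p.1) (ψ p.2) r).toFinset.card := card_union_le _ _
          _ ≤ U.card + 3 := by
              have := edgesOf_toFinset_card_le (ψ p.1) (ψ p.2) r; omega
      have h2 : PS.card = PS'.card + 1 := by omega
      omega
    have inv3' : ∀ q ∈ PS', s(ψ q.1, ψ q.2) ∉ U' := by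
      intro q hq
      have hq' : q ∈ PS := mem_of_mem_erase hq
      have hqp : q ≠ p := ne_of_mem_erase hq
      rw [hU', Finset.mem_union]
      push_neg
      refine ⟨inv3 q hq', ?_⟩
      rw [List.mem_toFinset]
      exact route_edge_ne c hr hplt (hlt q hq') hqp
    obtain ⟨route', hval', hdisj'⟩ := ih PS' U' hcard' hlt' inv1' inv2' inv3'
    refine ⟨Function.update route' p r, ?_, ?_⟩
    · intro q hq
      by_cases hqp : q = p
      · subst hqp
        rw [Function.update_self]
        exact hr
      · rw [Function.update_of_ne hqp]
        exact RouteValid.mono c hUsub (hval' q (Finset.mem_erase.2 ⟨hqp, hq⟩))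
    · intro q hq q' hq' hqq'
      by_cases hqp : q = p <;> by_cases hq'p : q' = p
      · exact absurd (hqp.trans hq'p.symm) hqq'
      · subst hqp
        rw [Function.update_self, Function.update_of_ne hq'p]
        -- q' avoids U' hence the edges of route p
        have hv := hval' q' (Finset.mem_erase.2 ⟨hq'p, hq'⟩)
        intro e he he'
        have := hv.2.2.2.2 e he'
        rw [hU', Finset.mem_union] at this
        push_neg at this
        exact this.2 (List.mem_toFinset.2 he)
      · subst hq'p
        rw [Function.update_self, Function.update_of_ne hqp]
        have hv := hval' q (Finset.mem_erase.2 ⟨hqp, hq⟩)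
        intro e he he'
        have := hv.2.2.2.2 e he
        rw [hU', Finset.mem_union] at this
        push_neg at this
        exact this.2 (List.mem_toFinset.2 he')
      · rw [Function.update_of_ne hqp, Function.update_of_ne hq'p]
        exact hdisj' q (Finset.mem_erase.2 ⟨hqp, hq⟩) q' (Finset.mem_erase.2 ⟨hq'p, hq'⟩) hqq'

lemma initial_inv1 (k : Fin t) :
    ((univ.filter (fun p : Fin t × Fin t => p.1 < p.2)).filter
      (fun p => p.1 = k ∨ p.2 = k)).card ≤ 2 * t := by
  classical
  have hsub : ((univ.filter (fun p : Fin t × Fin t => p.1 < p.2)).filter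
      (fun p => p.1 = k ∨ p.2 = k)) ⊆ ({k} ×ˢ univ) ∪ (univ ×ˢ {k}) := by
    intro p hp
    simp only [mem_filter] at hp
    rcases hp.2 with h | h
    · exact Finset.mem_union_left _ (Finset.mem_product.2 ⟨by simp [h], mem_univ _⟩)
    · exact Finset.mem_union_right _ (Finset.mem_product.2 ⟨mem_univ _, by simp [h]⟩)
  calc _ ≤ (({k} ×ˢ univ) ∪ ((univ : Finset (Fin t)) ×ˢ {k})).card := card_le_card hsub
    _ ≤ ({k} ×ˢ (univ : Finset (Fin t))).card + ((univ : Finset (Fin t)) ×ˢ {k}).card :=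
        card_union_le _ _
    _ ≤ 2 * t := by
        rw [Finset.card_product, Finset.card_product]
        simp [two_mul]

lemma initial_inv2 :
    3 * (univ.filter (fun p : Fin t × Fin t => p.1 < p.2)).card ≤ 3 * t * t := by
  have h : (univ.filter (fun p : Fin t × Fin t => p.1 < p.2)).card ≤ t * t := by
    calc _ ≤ (univ : Finset (Fin t × Fin t)).card := card_filter_le _ _
      _ = t * t := by simp
  have h2 : 3 * (t * t) = 3 * t * t := by ring
  omega

/-- The main combinatorial lemma. -/
lemma comb (hsym : ∀ i j : Vt t, c i j = c j i) :
    ∃ ψ : Fin t ↪ Vt t, ∃ route : Fin t × Fin t → List (Vt t),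
      (∀ p : Fin t × Fin t, p.1 < p.2 → RouteValid c ψ ∅ p (route p)) ∧
      (∀ p q : Fin t × Fin t, p.1 < p.2 → q.1 < q.2 → p ≠ q →
        List.Disjoint (edgesOf (ψ p.1) (ψ p.2) (route p))
          (edgesOf (ψ q.1) (ψ q.2) (route q))) := by
  classical
  have main : ∃ ψ : Fin t ↪ Vt t,
      (∀ (i j : Fin t) (U : Finset (Sym2 (Vt t))), i ≠ j →
        udeg U (ψ i) ≤ 2 * t → udeg U (ψ j) ≤ 2 * t → U.card ≤ 3 * t * t →
        c (ψ i) (ψ j) ≠ 0 → ∃ r, RouteValid c ψ U (i, j) r) := by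
    by_cases hcase : ∃ j : Vt t, 2 * t + 2 ≤ (useless c j).card
    · -- Case I : a large cluster of pairwise agreeing vertices
      obtain ⟨j, hj⟩ := hcase
      set C := (useless c j).filter (fun u => (dis c u j).card ≤ 12 * t) with hC
      set A := (useless c j).filter (fun u => (agr c u j).card ≤ 12 * t) with hA
      have hcover : useless c j ⊆ C ∪ A := by
        intro u hu
        have hu' := hu
        simp only [useless, mem_filter, mem_univ, true_and] at hu'
        rcases hu'.2 with h | h
        · exact Finset.mem_union_right _ (mem_filter.2 ⟨hu, h⟩)
        · exact Finset.mem_union_left _ (mem_filter.2 ⟨hu, h⟩)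
      have hmax : t + 1 ≤ C.card ∨ t + 1 ≤ A.card := by
        have := card_le_card hcover
        have := card_union_le C A
        omega
      -- in either case we get a set Q of ≥ t+1 vertices pairwise agreeing a lot
      have hQ : ∃ Q : Finset (Vt t), t ≤ Q.card ∧
          ∀ x ∈ Q, ∀ y ∈ Q, x ≠ y → 5 * t + 10 ≤ (agr c x y).card := by
        rcases hmax with h | h
        · refine ⟨C, by omega, ?_⟩
          intro x hx y hy hxy
          have hx' := mem_filter.1 hx
          have hy' := mem_filter.1 hy
          have hsub := dis_sub_clones c (x := x) (y := y) (j := j)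
          have hd : (dis c x y).card ≤ 12 * t + 12 * t + 1 := by
            calc (dis c x y).card ≤ (dis c x j ∪ dis c y j ∪ {j}).card := card_le_card hsub
              _ ≤ (dis c x j ∪ dis c y j).card + ({j} : Finset (Vt t)).card := card_union_le _ _
              _ ≤ (dis c x j).card + (dis c y j).card + 1 := by
                  have := card_union_le (dis c x j) (dis c y j); simp at *; omega
              _ ≤ 12 * t + 12 * t + 1 := by
                  have := hx'.2; have := hy'.2; omega
          have := agr_card_add_dis_card c (i := x) (j := y) hxy
          omega
        · refine ⟨A, by omega, ?_⟩
          intro x hx y hy hxy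
          have hx' := mem_filter.1 hx
          have hy' := mem_filter.1 hy
          have hsub := dis_sub_anticlones c (x := x) (y := y) (j := j)
          have hd : (dis c x y).card ≤ 12 * t + 12 * t + 1 := by
            calc (dis c x y).card ≤ (agr c x j ∪ agr c y j ∪ {j}).card := card_le_card hsub
              _ ≤ (agr c x j ∪ agr c y j).card + ({j} : Finset (Vt t)).card := card_union_le _ _
              _ ≤ (agr c x j).card + (agr c y j).card + 1 := by
                  have := card_union_le (agr c x j) (agr c y j); simp at *; omega
              _ ≤ 12 * t + 12 * t + 1 := by
                  have := hx'.2; have := hy'.2; omega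
          have := agr_card_add_dis_card c (i := x) (j := y) hxy
          omega
      obtain ⟨Q, hQcard, hQagr⟩ := hQ
      obtain ⟨Q', hQ'sub, hQ'card⟩ := Finset.exists_subset_card_eq hQcard
      set ψ : Fin t ↪ Vt t :=
        ⟨fun i => ((Q'.orderIsoOfFin hQ'card) i : Vt t), by
          intro a b hab
          have := Subtype.ext hab
          exact (Q'.orderIsoOfFin hQ'card).injective this⟩ with hψ
      have hψmem : ∀ i : Fin t, ψ i ∈ Q := by
        intro i
        exact hQ'sub ((Q'.orderIsoOfFin hQ'card) i).2
      refine ⟨ψ, ?_⟩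
      intro i j' U hij hdi hdj hU hne
      exact hfix_clone c ψ hsym
        (fun a b hab => hQagr _ (hψmem a) _ (hψmem b) (fun h => hab (ψ.injective h)))
        i j' U hij hdi hdj hU hne
    · -- Case II
      push_neg at hcase
      refine ⟨(Fin.castLEEmb (show t ≤ 70 * t + 71 by omega)), ?_⟩
      intro i j' U hij hdi hdj hU hne
      exact hfix_generic c _ hsym (fun x => by have := hcase x; omega)
        i j' U hij hdi hdj hU hne
  obtain ⟨ψ, HFix⟩ := main
  obtain ⟨route, hval, hdisj⟩ := greedy c ψ HFix
    (univ.filter (fun p : Fin t × Fin t => p.1 < p.2)).card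
    (univ.filter (fun p : Fin t × Fin t => p.1 < p.2)) ∅ rfl
    (fun p hp => (mem_filter.1 hp).2)
    (fun k => by
      have := initial_inv1 (t := t) k
      simp only [udeg, Finset.filter_empty, Finset.card_empty, zero_add]
      exact this)
    (by
      have := initial_inv2 (t := t)
      simp only [Finset.card_empty, zero_add]
      exact this)
    (by simp)
  refine ⟨ψ, route, ?_, ?_⟩
  · intro p hp
    exact hval p (mem_filter.2 ⟨mem_univ _, hp⟩)
  · intro p q hp hq hpq
    exact hdisj p (mem_filter.2 ⟨mem_univ _, hp⟩) q (mem_filter.2 ⟨mem_univ _, hq⟩) hpq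

/-! ### Part 2: composing routes with an immersion -/

section Compose

open SimpleGraph

variable {VG : Type*} {G : SimpleGraph VG}

variable {t : ℕ}

def adjT {a b : Vt t} (h : a ≠ b) : (⊤ : SimpleGraph (Vt t)).Adj a b := by
  rwa [SimpleGraph.top_adj]

variable (I : Immersion G (⊤ : SimpleGraph (Vt t)))

def Iwalk (a b : Vt t) : G.Walk (I.φ a) (I.φ b) :=
  if h : a = b then (Walk.nil : G.Walk (I.φ a) (I.φ a)).copy rfl (by rw [h])
  else I.trail (adjT h)

lemma Iwalk_eq {a b : Vt t} (h : a ≠ b) : Iwalk I a b = I.trail (adjT h) := dif_neg h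

def chainWalk (a b : Vt t) : List (Vt t) → G.Walk (I.φ a) (I.φ b)
  | [] => Iwalk I a b
  | [w] => (Iwalk I a w).append (Iwalk I w b)
  | u :: v :: _ => ((Iwalk I a u).append (Iwalk I u v)).append (Iwalk I v b)

/-- the parity coloring induced by an immersion of the complete graph -/
def cpar : Vt t → Vt t → ZMod 2 := fun a b =>
  if h : a = b then 0 else ((I.trail (adjT h)).length : ZMod 2)

lemma cpar_symm (a b : Vt t) : cpar I a b = cpar I b a := by
  by_cases h : a = b
  · subst h; rfl
  · rw [cpar, cpar, dif_neg h, dif_neg (Ne.symm h)]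
    have h2 : I.trail (adjT (Ne.symm h)) = (I.trail (adjT h)).reverse := I.symm (adjT h)
    rw [h2, Walk.length_reverse]

lemma cpar_eq {a b : Vt t} (h : a ≠ b) :
    cpar I a b = ((I.trail (adjT h)).length : ZMod 2) := dif_neg h

lemma sym2_ne' {α : Type*} {a b x y : α} (h1 : a ≠ x ∨ b ≠ y) (h2 : a ≠ y ∨ b ≠ x) :
    s(a, b) ≠ s(x, y) := by
  intro h
  rcases Sym2.eq_iff.1 h with ⟨e1, e2⟩ | ⟨e1, e2⟩
  · rcases h1 with h1 | h1 <;> [exact h1 e1; exact h1 e2]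
  · rcases h2 with h2 | h2 <;> [exact h2 e1; exact h2 e2]

lemma chainWalk_spec (a b : Vt t) (r : List (Vt t)) (hlen : r.length ≤ 2)
    (hnd : (a :: (r ++ [b])).Nodup) :
    (chainWalk I a b r).IsTrail ∧
    (((chainWalk I a b r).length : ZMod 2) = csum (cpar I) a b r) ∧
    (∀ e ∈ (chainWalk I a b r).edges, ∃ (x y : Vt t) (hxy : x ≠ y),
      s(x, y) ∈ edgesOf a b r ∧ e ∈ (I.trail (adjT hxy)).edges) := by
  rcases route_shape hlen with rfl | ⟨w, rfl⟩ | ⟨u, v, rfl⟩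
  · simp only [List.nil_append, List.nodup_cons, List.mem_singleton, List.nodup_singleton,
      and_true, List.not_mem_nil, not_false_iff] at hnd
    have hab : a ≠ b := by tauto
    rw [show chainWalk I a b [] = Iwalk I a b from rfl, Iwalk_eq I hab]
    refine ⟨I.isTrail _, ?_, ?_⟩
    · rw [show csum (cpar I) a b [] = cpar I a b from rfl, cpar_eq I hab]
    · intro e he
      exact ⟨a, b, hab, by simp [edgesOf], he⟩
  · simp only [List.cons_append, List.nodup_cons, List.mem_cons, List.mem_singleton,
      List.not_mem_nil, or_false, List.nodup_nil, and_true, not_or, List.mem_append,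
      List.nil_append] at hnd
    have haw : a ≠ w := by tauto
    have hab : a ≠ b := by tauto
    have hwb : w ≠ b := by tauto
    have hch : chainWalk I a b [w] = (Iwalk I a w).append (Iwalk I w b) := rfl
    rw [hch, Iwalk_eq I haw, Iwalk_eq I hwb]
    have hdisj : List.Disjoint (I.trail (adjT haw)).edges (I.trail (adjT hwb)).edges :=
      I.disjoint _ _ (sym2_ne' (Or.inl haw) (Or.inl hab))
    refine ⟨⟨?_⟩, ?_, ?_⟩
    · rw [Walk.edges_append, List.nodup_append]
      exact ⟨(I.isTrail _).edges_nodup, (I.isTrail _).edges_nodup,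
        fun a ha b hb hab => by subst hab; exact hdisj ha hb⟩
    · rw [Walk.length_append]
      rw [show csum (cpar I) a b [w] = cpar I a w + cpar I w b from rfl,
        cpar_eq I haw, cpar_eq I hwb]
      push_cast
      ring
    · intro e he
      rw [Walk.edges_append, List.mem_append] at he
      rcases he with he | he
      · exact ⟨a, w, haw, by simp [edgesOf], he⟩
      · exact ⟨w, b, hwb, by simp [edgesOf], he⟩
  · simp only [List.cons_append, List.nodup_cons, List.mem_cons, List.mem_singleton,
      List.not_mem_nil, or_false, List.nodup_nil, and_true, not_or, List.mem_append,
      List.nil_append] at hnd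
    have hau : a ≠ u := by tauto
    have hav : a ≠ v := by tauto
    have hab : a ≠ b := by tauto
    have huv : u ≠ v := by tauto
    have hub : u ≠ b := by tauto
    have hvb : v ≠ b := by tauto
    have hch : chainWalk I a b [u, v]
        = ((Iwalk I a u).append (Iwalk I u v)).append (Iwalk I v b) := rfl
    rw [hch, Iwalk_eq I hau, Iwalk_eq I huv, Iwalk_eq I hvb]
    have hd1 : List.Disjoint (I.trail (adjT hau)).edges (I.trail (adjT huv)).edges :=
      I.disjoint _ _ (sym2_ne' (Or.inl hau) (Or.inl hav))
    have hd2 : List.Disjoint (I.trail (adjT hau)).edges (I.trail (adjT hvb)).edges :=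
      I.disjoint _ _ (sym2_ne' (Or.inl hav) (Or.inl hab))
    have hd3 : List.Disjoint (I.trail (adjT huv)).edges (I.trail (adjT hvb)).edges :=
      I.disjoint _ _ (sym2_ne' (Or.inl huv) (Or.inl hub))
    refine ⟨⟨?_⟩, ?_, ?_⟩
    · rw [Walk.edges_append, Walk.edges_append, List.nodup_append, List.nodup_append]
      refine ⟨⟨(I.isTrail _).edges_nodup, (I.isTrail _).edges_nodup,
        fun a ha b hb hab => by subst hab; exact hd1 ha hb⟩,
        (I.isTrail _).edges_nodup, ?_⟩
      intro e he
      rw [List.mem_append] at he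
      rcases he with he | he
      · exact fun b hb hab => by subst hab; exact hd2 he hb
      · exact fun b hb hab => by subst hab; exact hd3 he hb
    · rw [Walk.length_append, Walk.length_append]
      rw [show csum (cpar I) a b [u, v] = cpar I a u + cpar I u v + cpar I v b from rfl,
        cpar_eq I hau, cpar_eq I huv, cpar_eq I hvb]
      push_cast
      ring
    · intro e he
      rw [Walk.edges_append, Walk.edges_append, List.mem_append, List.mem_append] at he
      rcases he with (he | he) | he
      · exact ⟨a, u, hau, by simp [edgesOf], he⟩
      · exact ⟨u, v, huv, by simp [edgesOf], he⟩
      · exact ⟨v, b, hvb, by simp [edgesOf], he⟩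

variable (ψ : Fin t ↪ Vt t) (route : Fin t × Fin t → List (Vt t))

def F (u v : Fin t) : G.Walk (I.φ (ψ u)) (I.φ (ψ v)) :=
  if h : u < v then chainWalk I (ψ u) (ψ v) (route (u, v))
  else if h' : v < u then (chainWalk I (ψ v) (ψ u) (route (v, u))).reverse
  else (by
    have : u = v := le_antisymm (not_lt.1 h') (not_lt.1 h)
    exact (Walk.nil : G.Walk (I.φ (ψ u)) (I.φ (ψ u))).copy rfl (by rw [this]))

lemma F_lt {u v : Fin t} (h : u < v) :
    F I ψ route u v = chainWalk I (ψ u) (ψ v) (route (u, v)) := dif_pos h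

lemma F_gt {u v : Fin t} (h : v < u) :
    F I ψ route u v = (chainWalk I (ψ v) (ψ u) (route (v, u))).reverse := by
  rw [F, dif_neg (asymm h), dif_pos h]

lemma F_symm {u v : Fin t} (huv : u ≠ v) :
    F I ψ route v u = (F I ψ route u v).reverse := by
  rcases lt_or_gt_of_ne huv with h | h
  · rw [F_lt I ψ route h, F_gt I ψ route h]
  · rw [F_gt I ψ route h, F_lt I ψ route h, Walk.reverse_reverse]

/-- The assembled totally even immersion. -/
lemma build
    (hval : ∀ p : Fin t × Fin t, p.1 < p.2 → RouteValid (cpar I) ψ ∅ p (route p))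
    (hdisj : ∀ p q : Fin t × Fin t, p.1 < p.2 → q.1 < q.2 → p ≠ q →
      List.Disjoint (edgesOf (ψ p.1) (ψ p.2) (route p))
        (edgesOf (ψ q.1) (ψ q.2) (route q))) :
    ∃ J : Immersion G (⊤ : SimpleGraph (Fin t)),
      ∀ ⦃u v : Fin t⦄ (h : (⊤ : SimpleGraph (Fin t)).Adj u v), Even (J.trail h).length := by
  classical
  have spec : ∀ p : Fin t × Fin t, p.1 < p.2 →
      (chainWalk I (ψ p.1) (ψ p.2) (route p)).IsTrail ∧
      (((chainWalk I (ψ p.1) (ψ p.2) (route p)).length : ZMod 2)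
        = csum (cpar I) (ψ p.1) (ψ p.2) (route p)) ∧
      (∀ e ∈ (chainWalk I (ψ p.1) (ψ p.2) (route p)).edges, ∃ (x y : Vt t) (hxy : x ≠ y),
        s(x, y) ∈ edgesOf (ψ p.1) (ψ p.2) (route p) ∧ e ∈ (I.trail (adjT hxy)).edges) := by
    intro p hp
    exact chainWalk_spec I (ψ p.1) (ψ p.2) (route p) (hval p hp).1 (hval p hp).2.1
  -- cross-pair disjointness of the chain walks
  have chaindisj : ∀ p q : Fin t × Fin t, p.1 < p.2 → q.1 < q.2 → p ≠ q →
      List.Disjoint (chainWalk I (ψ p.1) (ψ p.2) (route p)).edges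
        (chainWalk I (ψ q.1) (ψ q.2) (route q)).edges := by
    intro p q hp hq hpq e hep heq
    obtain ⟨x, y, hxy, hmem, he⟩ := (spec p hp).2.2 e hep
    obtain ⟨x', y', hxy', hmem', he'⟩ := (spec q hq).2.2 e heq
    have hne : s(x, y) ≠ s(x', y') := by
      intro h
      rw [h] at hmem
      exact hdisj p q hp hq hpq hmem hmem'
    exact I.disjoint (adjT hxy) (adjT hxy') hne he he'
  -- every F-walk's edges live in the corresponding "ordered" chain walk
  have Fedges : ∀ u v : Fin t, u ≠ v → ∃ p : Fin t × Fin t, p.1 < p.2 ∧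
      s(p.1, p.2) = s(u, v) ∧
      ∀ e, e ∈ (F I ψ route u v).edges ↔
        e ∈ (chainWalk I (ψ p.1) (ψ p.2) (route p)).edges := by
    intro u v huv
    rcases lt_or_gt_of_ne huv with h | h
    · exact ⟨(u, v), h, rfl, fun e => by rw [F_lt I ψ route h]⟩
    · refine ⟨(v, u), h, Sym2.eq_swap, fun e => ?_⟩
      rw [F_gt I ψ route h, Walk.edges_reverse, List.mem_reverse]
  refine ⟨{ φ := ψ.trans I.φ,
            trail := fun u v h => F I ψ route u v,
            isTrail := ?_, symm := ?_, disjoint := ?_ }, ?_⟩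
  · intro u v h
    have huv : u ≠ v := by rwa [SimpleGraph.top_adj] at h
    show (F I ψ route u v).IsTrail
    rcases lt_or_gt_of_ne huv with hlt | hlt
    · rw [F_lt I ψ route hlt]
      exact (spec (u, v) hlt).1
    · rw [F_gt I ψ route hlt]
      exact ((spec (v, u) hlt).1).reverse
  · intro u v h
    have huv : u ≠ v := by rwa [SimpleGraph.top_adj] at h
    show F I ψ route v u = (F I ψ route u v).reverse
    exact F_symm I ψ route huv
  · intro u v a b h₁ h₂ hne
    have huv : u ≠ v := by rwa [SimpleGraph.top_adj] at h₁
    have hab : a ≠ b := by rwa [SimpleGraph.top_adj] at h₂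
    obtain ⟨p, hp, hps, hpe⟩ := Fedges u v huv
    obtain ⟨q, hq, hqs, hqe⟩ := Fedges a b hab
    show List.Disjoint (F I ψ route u v).edges (F I ψ route a b).edges
    have hpq : p ≠ q := by
      intro h
      apply hne
      rw [← hps, ← hqs, h]
    intro e hep heq
    exact chaindisj p q hp hq hpq ((hpe e).1 hep) ((hqe e).1 heq)
  · intro u v h
    have huv : u ≠ v := by rwa [SimpleGraph.top_adj] at h
    show Even (F I ψ route u v).length
    have key : ∀ p : Fin t × Fin t, p.1 < p.2 →
        Even (chainWalk I (ψ p.1) (ψ p.2) (route p)).length := by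
      intro p hp
      have h1 := (spec p hp).2.1
      have h2 := (hval p hp).2.2.2.1
      rw [h2] at h1
      rw [even_iff_two_dvd]
      exact (ZMod.natCast_eq_zero_iff _ 2).1 h1
    rcases lt_or_gt_of_ne huv with hlt | hlt
    · rw [F_lt I ψ route hlt]
      exact key (u, v) hlt
    · rw [F_gt I ψ route hlt, Walk.length_reverse]
      exact key (v, u) hlt

end Compose

end TEI


/-- If G admits an immersion of K_{70t + 71}, then G admits a totally even
immersion of K_t. -/
theorem totally_even_from_immersion {V : Type*} [Fintype V] (t : ℕ) (ht : 1 ≤ t)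
    (G : SimpleGraph V) (h : HasImmersion G (⊤ : SimpleGraph (Fin (70 * t + 71)))) :
    HasTotallyEvenImmersion G (⊤ : SimpleGraph (Fin t)) := by
  obtain ⟨I⟩ := h
  obtain ⟨ψ, route, hval, hdisj⟩ := TEI.comb (TEI.cpar I) (TEI.cpar_symm I)
  obtain ⟨J, hJ⟩ := TEI.build I ψ route hval hdisj
  exact ⟨J, hJ⟩
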